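/- If x̂ ∈ ℝ^d lies in D_κ, then the rank-one matrices satisfy ‖x̂x̂* − x̂_{{j}}x̂_{{j}}*‖_{HS} ≤ √2 ‖x̂‖₂ r_{j+1}(x̂) · 1/√(1−κ²) ≤ √2 ‖x̂‖₂ r_j(x̂) · κ/√(1−κ²). -/

import Mathlib

noncomputable section
open scoped BigOperators

/-- Best `j`-sparse approximation of `x` (given a sorting permutation `σ`). -/
def trunc {d : ℕ} (σ : Equiv.Perm (Fin d)) (j : ℕ) (x : EuclideanSpace ℝ (Fin d)) :
    EuclideanSpace ℝ (Fin d) :=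
  WithLp.toLp 2 fun i => if (σ.symm i : ℕ) < j then x i else 0

/-- The outer product `x y*` as a matrix. -/
def outer {d : ℕ} (x y : EuclideanSpace ℝ (Fin d)) : Matrix (Fin d) (Fin d) ℝ :=
  Matrix.of fun i j => x i * y j

/-- The Hilbert–Schmidt (Frobenius) norm of a matrix. -/
def hsNorm {d : ℕ} (M : Matrix (Fin d) (Fin d) ℝ) : ℝ :=
  Real.sqrt (∑ i, ∑ j, (M i j) ^ 2)

/-- Lemma 3.7 of the paper: if `x̂ ∈ 𝒟_κ`, then
`‖x̂x̂* − x̂_{j}x̂_{j}*‖_HS ≤ √2‖x̂‖ r_{j+1}(x̂)/√(1−κ²) ≤ √2‖x̂‖ r_j(x̂) κ/√(1−κ²)`.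
Here `σ` sorts `x̂` nonincreasingly in absolute value, `r_m(x̂) = |x̂ (σ (m-1))|`. -/
theorem outer_sparse_approx_error_of_rapidly_decaying
    {d : ℕ} (κ : ℝ) (hκ0 : 0 < κ) (hκ1 : κ < 1)
    (xh : EuclideanSpace ℝ (Fin d)) (σ : Equiv.Perm (Fin d))
    (hsort : ∀ i j : Fin d, i ≤ j → |xh (σ j)| ≤ |xh (σ i)|)
    (hdecay : ∀ i : Fin d, ∀ h : (i : ℕ) + 1 < d, |xh (σ ⟨(i : ℕ) + 1, h⟩)| ≤ κ * |xh (σ i)|)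
    (j : ℕ) (hj1 : 1 ≤ j) (hjd : j < d) (hj1d : j - 1 < d) :
    hsNorm (outer xh xh - outer (trunc σ j xh) (trunc σ j xh)) ≤
      Real.sqrt 2 * ‖xh‖ * |xh (σ ⟨j, hjd⟩)| * (1 / Real.sqrt (1 - κ ^ 2)) ∧
    Real.sqrt 2 * ‖xh‖ * |xh (σ ⟨j, hjd⟩)| * (1 / Real.sqrt (1 - κ ^ 2)) ≤
      Real.sqrt 2 * ‖xh‖ * |xh (σ ⟨j - 1, hj1d⟩)| * (κ / Real.sqrt (1 - κ ^ 2)) := by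
  have hκ2 : (0:ℝ) ≤ κ ^ 2 := sq_nonneg κ
  have hκ21 : κ ^ 2 < 1 := by nlinarith
  have h1mκ : (0:ℝ) < 1 - κ ^ 2 := by linarith
  set rj := |xh (σ ⟨j, hjd⟩)| with hrj
  have hrj0 : 0 ≤ rj := abs_nonneg _
  -- decay estimate
  have decay : ∀ n (hn : n < d), j ≤ n → |xh (σ ⟨n, hn⟩)| ≤ κ ^ (n - j) * rj := by
    intro n
    induction n with
    | zero => intro hn hjn; omega
    | succ n ih =>
      intro hn hjn
      rcases eq_or_lt_of_le hjn with h | h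
      · have he : (⟨n + 1, hn⟩ : Fin d) = ⟨j, hjd⟩ := Fin.ext (by simp [← h])
        rw [he, ← h, Nat.sub_self, pow_zero, one_mul]
      · have hjn' : j ≤ n := Nat.lt_succ_iff.mp h
        have hnd : n < d := Nat.lt_of_succ_lt hn
        have h1 : |xh (σ ⟨n + 1, hn⟩)| ≤ κ * |xh (σ ⟨n, hnd⟩)| := hdecay ⟨n, hnd⟩ hn
        have h2 := ih hnd hjn'
        have : n + 1 - j = (n - j) + 1 := by omega
        rw [this, pow_succ]
        calc |xh (σ ⟨n + 1, hn⟩)| ≤ κ * |xh (σ ⟨n, hnd⟩)| := h1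
          _ ≤ κ * (κ ^ (n - j) * rj) := by
              exact mul_le_mul_of_nonneg_left h2 hκ0.le
          _ = κ ^ (n - j) * κ * rj := by ring
  -- norm squared
  have hx2 : ∑ i, xh i ^ 2 = ‖xh‖ ^ 2 := by
    rw [EuclideanSpace.norm_eq, Real.sq_sqrt (by positivity)]
    simp [Real.norm_eq_abs, sq_abs]
  -- tail sum
  set g : Fin d → ℝ := fun i => if (σ.symm i : ℕ) < j then 0 else xh i ^ 2 with hg
  have hgnn : ∀ i, 0 ≤ g i := by intro i; simp only [hg]; positivity
  have hτ : ∑ i, g i = ∑ m : Fin d, (if (m : ℕ) < j then 0 else xh (σ m) ^ 2) := by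
    rw [← Equiv.sum_comp σ g]
    simp [hg]
  -- tail sum bound
  have hτle : ∑ i, g i ≤ rj ^ 2 * (1 - κ ^ 2)⁻¹ := by
    rw [hτ]
    have step1 : ∑ m : Fin d, (if (m : ℕ) < j then 0 else xh (σ m) ^ 2)
        ≤ ∑ m : Fin d, (if (m : ℕ) < j then 0 else (κ ^ 2) ^ ((m : ℕ) - j) * rj ^ 2) := by
      apply Finset.sum_le_sum
      intro m _
      by_cases hm : (m : ℕ) < j
      · simp [hm]
      · simp only [hm, if_false]
        have hjm : j ≤ (m : ℕ) := not_lt.mp hm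
        have := decay (m : ℕ) m.2 hjm
        have hb : (0:ℝ) ≤ κ ^ ((m : ℕ) - j) * rj := by positivity
        calc xh (σ m) ^ 2 = |xh (σ m)| ^ 2 := (sq_abs _).symm
          _ ≤ (κ ^ ((m : ℕ) - j) * rj) ^ 2 := by
              apply pow_le_pow_left₀ (abs_nonneg _)
              simpa using this
          _ = (κ ^ 2) ^ ((m : ℕ) - j) * rj ^ 2 := by
              rw [mul_pow, ← pow_mul, ← pow_mul, Nat.mul_comm]
    have step2 : ∑ m : Fin d, (if (m : ℕ) < j then 0 else (κ ^ 2) ^ ((m : ℕ) - j) * rj ^ 2)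
        ≤ (1 - κ ^ 2)⁻¹ * rj ^ 2 := by
      have hfin : ∑ m : Fin d, (if (m : ℕ) < j then 0 else (κ ^ 2) ^ ((m : ℕ) - j) * rj ^ 2)
          = ∑ i ∈ Finset.range d, (if i < j then 0 else (κ ^ 2) ^ (i - j) * rj ^ 2) :=
        Fin.sum_univ_eq_sum_range (fun i => if i < j then 0 else (κ ^ 2) ^ (i - j) * rj ^ 2) d
      rw [hfin, Finset.range_eq_Ico, ← Finset.sum_Ico_consecutive _ (Nat.zero_le j) hjd.le]
      have hz : ∑ i ∈ Finset.Ico 0 j, (if i < j then 0 else (κ ^ 2) ^ (i - j) * rj ^ 2) = 0 := by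
        apply Finset.sum_eq_zero
        intro i hi
        simp [Finset.mem_Ico.mp hi |>.2]
      rw [hz, zero_add]
      have h2 : ∑ i ∈ Finset.Ico j d, (if i < j then 0 else (κ ^ 2) ^ (i - j) * rj ^ 2)
          = ∑ i ∈ Finset.range (d - j), (κ ^ 2) ^ i * rj ^ 2 := by
        rw [Finset.sum_Ico_eq_sum_range]
        apply Finset.sum_congr rfl
        intro i _
        have : ¬ (j + i < j) := by omega
        simp [this, Nat.add_sub_cancel_left]
      rw [h2, ← Finset.sum_mul]
      apply mul_le_mul_of_nonneg_right _ (by positivity)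
      have := tsum_geometric_of_lt_one hκ2 hκ21
      exact this ▸ Summable.sum_le_tsum _ (fun i _ => by positivity)
        (summable_geometric_of_lt_one hκ2 hκ21)
    calc _ ≤ _ := step1
      _ ≤ (1 - κ ^ 2)⁻¹ * rj ^ 2 := step2
      _ = rj ^ 2 * (1 - κ ^ 2)⁻¹ := by ring
  -- entrywise bound on the matrix
  have hS : ∑ i, ∑ k, ((outer xh xh - outer (trunc σ j xh) (trunc σ j xh)) i k) ^ 2
      ≤ 2 * ‖xh‖ ^ 2 * (∑ i, g i) := by
    have hent : ∀ i k : Fin d,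
        ((outer xh xh - outer (trunc σ j xh) (trunc σ j xh)) i k) ^ 2
          ≤ g i * xh k ^ 2 + xh i ^ 2 * g k := by
      intro i k
      simp only [outer, trunc, Matrix.sub_apply, Matrix.of_apply, hg]
      by_cases hi : (σ.symm i : ℕ) < j <;> by_cases hk : (σ.symm k : ℕ) < j <;>
        simp [hi, hk] <;> nlinarith [sq_nonneg (xh i), sq_nonneg (xh k),
          sq_nonneg (xh i * xh k)]
    calc ∑ i, ∑ k, ((outer xh xh - outer (trunc σ j xh) (trunc σ j xh)) i k) ^ 2
        ≤ ∑ i, ∑ k, (g i * xh k ^ 2 + xh i ^ 2 * g k) := by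
          apply Finset.sum_le_sum; intro i _
          apply Finset.sum_le_sum; intro k _
          exact hent i k
      _ = (∑ i, g i) * (∑ k, xh k ^ 2) + (∑ i, xh i ^ 2) * (∑ k, g k) := by
          simp only [Finset.sum_add_distrib, Finset.sum_mul_sum]
      _ = 2 * ‖xh‖ ^ 2 * (∑ i, g i) := by rw [hx2]; ring
  constructor
  · -- first inequality
    have hB0 : 0 ≤ Real.sqrt 2 * ‖xh‖ * rj * (1 / Real.sqrt (1 - κ ^ 2)) := by positivity
    rw [hsNorm]
    rw [show Real.sqrt 2 * ‖xh‖ * rj * (1 / Real.sqrt (1 - κ ^ 2))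
        = Real.sqrt ((Real.sqrt 2 * ‖xh‖ * rj * (1 / Real.sqrt (1 - κ ^ 2))) ^ 2) from
      (Real.sqrt_sq hB0).symm]
    apply Real.sqrt_le_sqrt
    have hsq : (Real.sqrt 2 * ‖xh‖ * rj * (1 / Real.sqrt (1 - κ ^ 2))) ^ 2
        = 2 * ‖xh‖ ^ 2 * rj ^ 2 * (1 / (1 - κ ^ 2)) := by
      have h2 : Real.sqrt 2 ^ 2 = 2 := Real.sq_sqrt (by norm_num)
      have hs : Real.sqrt (1 - κ ^ 2) ^ 2 = 1 - κ ^ 2 := Real.sq_sqrt h1mκ.le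
      rw [mul_pow, mul_pow, mul_pow, div_pow, one_pow, h2, hs]
    rw [hsq]
    have := mul_le_mul_of_nonneg_left hτle (by positivity : (0:ℝ) ≤ 2 * ‖xh‖ ^ 2)
    calc ∑ i, ∑ k, ((outer xh xh - outer (trunc σ j xh) (trunc σ j xh)) i k) ^ 2
        ≤ 2 * ‖xh‖ ^ 2 * (∑ i, g i) := hS
      _ ≤ 2 * ‖xh‖ ^ 2 * (rj ^ 2 * (1 - κ ^ 2)⁻¹) := this
      _ = 2 * ‖xh‖ ^ 2 * rj ^ 2 * (1 / (1 - κ ^ 2)) := by ring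
  · -- second inequality
    have hjj : j - 1 + 1 = j := by omega
    have hd' : (j - 1 : ℕ) + 1 < d := by omega
    have hdec : rj ≤ κ * |xh (σ ⟨j - 1, hj1d⟩)| := by
      have h := hdecay ⟨j - 1, hj1d⟩ hd'
      have he : (⟨((⟨j - 1, hj1d⟩ : Fin d) : ℕ) + 1, hd'⟩ : Fin d) = ⟨j, hjd⟩ :=
        Fin.ext (by show (j - 1) + 1 = j; omega)
      rw [he] at h
      exact h
    have hc : 0 ≤ Real.sqrt 2 * ‖xh‖ * (1 / Real.sqrt (1 - κ ^ 2)) := by positivity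
    calc Real.sqrt 2 * ‖xh‖ * rj * (1 / Real.sqrt (1 - κ ^ 2))
        = (Real.sqrt 2 * ‖xh‖ * (1 / Real.sqrt (1 - κ ^ 2))) * rj := by ring
      _ ≤ (Real.sqrt 2 * ‖xh‖ * (1 / Real.sqrt (1 - κ ^ 2))) *
            (κ * |xh (σ ⟨j - 1, hj1d⟩)|) := mul_le_mul_of_nonneg_left hdec hc
      _ = Real.sqrt 2 * ‖xh‖ * |xh (σ ⟨j - 1, hj1d⟩)| * (κ / Real.sqrt (1 - κ ^ 2)) := by
          ring
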